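/- For all integers k ≥ 1 and n ≥ 4, γ_{[k]R}(C_6 □ P_n) ≤ 6(n−2)·⌈(k+5)/5⌉ + 12·⌈(k+3−⌈(k+5)/5⌉)/3⌉ − 2⌈n/2⌉. -/

import Mathlib

open scoped Classical

/-- The cylindrical grid `C_m □ P_n`: the Cartesian (box) product of the
cycle on `m` vertices with the path on `n` vertices. -/
def cylinder (m n : ℕ) : SimpleGraph (Fin m × Fin n) :=
  (SimpleGraph.cycleGraph m).boxProd (SimpleGraph.pathGraph n)

/-- Sum of `f` over the closed neighborhood of `v`. -/
noncomputable def nbhdSum {V : Type*} [Fintype V] (G : SimpleGraph V) (f : V → ℕ) (v : V) : ℕ :=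
  ∑ u ∈ Finset.univ.filter (fun u => G.Adj v u ∨ u = v), f u

/-- The number of active neighbors of `v`, i.e. neighbors with positive label. -/
noncomputable def anCard {V : Type*} [Fintype V] (G : SimpleGraph V) (f : V → ℕ) (v : V) : ℕ :=
  (Finset.univ.filter (fun u => G.Adj v u ∧ 0 < f u)).card

/-- `f : V → {0,…,k+1}` is a `[k]`-Roman dominating function on `G`. -/
def IsKRDF {V : Type*} [Fintype V] (k : ℕ) (G : SimpleGraph V) (f : V → ℕ) : Prop :=
  (∀ v, f v ≤ k + 1) ∧ ∀ v, f v < k → k + anCard G f v ≤ nbhdSum G f v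

/-- The `[k]`-Roman domination number: the minimum weight of a `[k]`-RDF. -/
noncomputable def gammaKR {V : Type*} [Fintype V] (k : ℕ) (G : SimpleGraph V) : ℕ :=
  sInf {w | ∃ f : V → ℕ, IsKRDF k G f ∧ w = ∑ v, f v}

set_option linter.unusedSectionVars false

set_option maxHeartbeats 1000000 in
lemma cyl6_adj {n : ℕ} {a b : Fin 6 × Fin n} :
    (cylinder 6 n).Adj a b ↔
      ((b.1.val = (a.1.val + 1) % 6 ∨ a.1.val = (b.1.val + 1) % 6) ∧ b.2.val = a.2.val) ∨
      ((b.2.val = a.2.val + 1 ∨ a.2.val = b.2.val + 1) ∧ b.1.val = a.1.val) := by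
  show (SimpleGraph.cycleGraph 6).Adj a.1 b.1 ∧ a.2 = b.2 ∨
       (SimpleGraph.pathGraph n).Adj a.2 b.2 ∧ a.1 = b.1 ↔ _
  rw [SimpleGraph.cycleGraph_adj', SimpleGraph.pathGraph_adj]
  rw [Fin.sub_def, Fin.sub_def]
  simp only [Fin.ext_iff, Fin.val_mk]
  have := a.1.isLt; have := b.1.isLt
  omega

section helpers
variable {V : Type*} [DecidableEq V]

lemma card_filter_min1 (f : V → ℕ) (a : V) :
    (({a} : Finset V).filter (fun u => 0 < f u)).card ≤ min (f a) 1 := by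
  by_cases h : 0 < f a <;> simp [Finset.filter_singleton, h] <;> omega

lemma card_filter_min2 (f : V → ℕ) (a b : V) :
    (({a,b} : Finset V).filter (fun u => 0 < f u)).card ≤ min (f a) 1 + min (f b) 1 := by
  rw [show ({a,b} : Finset V) = insert a {b} from rfl, Finset.filter_insert]
  by_cases h : 0 < f a
  · rw [if_pos h]
    calc (insert a (Finset.filter (fun u => 0 < f u) {b})).card
        ≤ (Finset.filter (fun u => 0 < f u) {b}).card + 1 := Finset.card_insert_le _ _
      _ ≤ _ := by have := card_filter_min1 f b; omega
  · rw [if_neg h]; have := card_filter_min1 f b; omega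

lemma card_filter_min3 (f : V → ℕ) (a b c : V) :
    (({a,b,c} : Finset V).filter (fun u => 0 < f u)).card ≤
      min (f a) 1 + min (f b) 1 + min (f c) 1 := by
  rw [show ({a,b,c} : Finset V) = insert a {b,c} from rfl, Finset.filter_insert]
  by_cases h : 0 < f a
  · rw [if_pos h]
    calc (insert a (Finset.filter (fun u => 0 < f u) {b,c})).card
        ≤ (Finset.filter (fun u => 0 < f u) {b,c}).card + 1 := Finset.card_insert_le _ _
      _ ≤ _ := by have := card_filter_min2 f b c; omega
  · rw [if_neg h]; have := card_filter_min2 f b c; omega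

lemma card_filter_min4 (f : V → ℕ) (a b c d : V) :
    (({a,b,c,d} : Finset V).filter (fun u => 0 < f u)).card ≤
      min (f a) 1 + min (f b) 1 + min (f c) 1 + min (f d) 1 := by
  rw [show ({a,b,c,d} : Finset V) = insert a {b,c,d} from rfl, Finset.filter_insert]
  by_cases h : 0 < f a
  · rw [if_pos h]
    calc (insert a (Finset.filter (fun u => 0 < f u) {b,c,d})).card
        ≤ (Finset.filter (fun u => 0 < f u) {b,c,d}).card + 1 := Finset.card_insert_le _ _
      _ ≤ _ := by have := card_filter_min3 f b c d; omega
  · rw [if_neg h]; have := card_filter_min3 f b c d; omega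

end helpers

section nbhd
variable {n : ℕ} (f : Fin 6 × Fin n → ℕ)

lemma nbhd_interior (i : Fin 6) (j : Fin n) (h0 : 0 < j.val) (h1 : j.val < n - 1) :
    nbhdSum (cylinder 6 n) f (i, j) =
      f (i, j) + (f (⟨(i.val+1)%6, by omega⟩, j) + (f (⟨(i.val+5)%6, by omega⟩, j)
        + (f (i, ⟨j.val-1, by omega⟩) + f (i, ⟨j.val+1, by omega⟩)))) := by
  have hi := i.isLt; have hj := j.isLt
  unfold nbhdSum
  have hset : ∀ (inst : DecidablePred fun u => (cylinder 6 n).Adj (i,j) u ∨ u = (i,j)),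
      (@Finset.filter _ (fun u => (cylinder 6 n).Adj (i,j) u ∨ u = (i,j)) inst Finset.univ) =
      {(i,j), (⟨(i.val+1)%6, by omega⟩, j), (⟨(i.val+5)%6, by omega⟩, j),
       (i, ⟨j.val-1, by omega⟩), (i, ⟨j.val+1, by omega⟩)} := by
    intro inst
    ext u
    simp only [Finset.mem_filter, Finset.mem_univ, true_and, Finset.mem_insert,
      Finset.mem_singleton, cyl6_adj, Prod.ext_iff, Fin.ext_iff, Fin.val_mk]
    have := u.1.isLt; have := u.2.isLt
    omega
  rw [hset _]
  rw [Finset.sum_insert (by simp only [Finset.mem_insert, Finset.mem_singleton,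
        Prod.ext_iff, Fin.ext_iff, Fin.val_mk]; omega),
      Finset.sum_insert (by simp only [Finset.mem_insert, Finset.mem_singleton,
        Prod.ext_iff, Fin.ext_iff, Fin.val_mk]; omega),
      Finset.sum_insert (by simp only [Finset.mem_insert, Finset.mem_singleton,
        Prod.ext_iff, Fin.ext_iff, Fin.val_mk]; omega),
      Finset.sum_insert (by simp only [Finset.mem_singleton,
        Prod.ext_iff, Fin.ext_iff, Fin.val_mk]; omega),
      Finset.sum_singleton]

lemma nbhd_left (i : Fin 6) (j : Fin n) (hj : j.val = 0) (hn : 1 < n) :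
    nbhdSum (cylinder 6 n) f (i, j) =
      f (i, j) + (f (⟨(i.val+1)%6, by omega⟩, j) + (f (⟨(i.val+5)%6, by omega⟩, j)
        + f (i, ⟨j.val+1, by omega⟩))) := by
  have hi := i.isLt; have hjlt := j.isLt
  unfold nbhdSum
  have hset : ∀ (inst : DecidablePred fun u => (cylinder 6 n).Adj (i,j) u ∨ u = (i,j)),
      (@Finset.filter _ (fun u => (cylinder 6 n).Adj (i,j) u ∨ u = (i,j)) inst Finset.univ) =
      {(i,j), (⟨(i.val+1)%6, by omega⟩, j), (⟨(i.val+5)%6, by omega⟩, j),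
       (i, ⟨j.val+1, by omega⟩)} := by
    intro inst
    ext u
    simp only [Finset.mem_filter, Finset.mem_univ, true_and, Finset.mem_insert,
      Finset.mem_singleton, cyl6_adj, Prod.ext_iff, Fin.ext_iff, Fin.val_mk]
    have := u.1.isLt; have := u.2.isLt
    omega
  rw [hset _]
  rw [Finset.sum_insert (by simp only [Finset.mem_insert, Finset.mem_singleton,
        Prod.ext_iff, Fin.ext_iff, Fin.val_mk]; omega),
      Finset.sum_insert (by simp only [Finset.mem_insert, Finset.mem_singleton,
        Prod.ext_iff, Fin.ext_iff, Fin.val_mk]; omega),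
      Finset.sum_insert (by simp only [Finset.mem_singleton,
        Prod.ext_iff, Fin.ext_iff, Fin.val_mk]; omega),
      Finset.sum_singleton]

lemma nbhd_right (i : Fin 6) (j : Fin n) (hj : j.val = n - 1) (hn : 1 < n) :
    nbhdSum (cylinder 6 n) f (i, j) =
      f (i, j) + (f (⟨(i.val+1)%6, by omega⟩, j) + (f (⟨(i.val+5)%6, by omega⟩, j)
        + f (i, ⟨j.val-1, by omega⟩))) := by
  have hi := i.isLt; have hjlt := j.isLt
  unfold nbhdSum
  have hset : ∀ (inst : DecidablePred fun u => (cylinder 6 n).Adj (i,j) u ∨ u = (i,j)),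
      (@Finset.filter _ (fun u => (cylinder 6 n).Adj (i,j) u ∨ u = (i,j)) inst Finset.univ) =
      {(i,j), (⟨(i.val+1)%6, by omega⟩, j), (⟨(i.val+5)%6, by omega⟩, j),
       (i, ⟨j.val-1, by omega⟩)} := by
    intro inst
    ext u
    simp only [Finset.mem_filter, Finset.mem_univ, true_and, Finset.mem_insert,
      Finset.mem_singleton, cyl6_adj, Prod.ext_iff, Fin.ext_iff, Fin.val_mk]
    have := u.1.isLt; have := u.2.isLt
    omega
  rw [hset _]
  rw [Finset.sum_insert (by simp only [Finset.mem_insert, Finset.mem_singleton,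
        Prod.ext_iff, Fin.ext_iff, Fin.val_mk]; omega),
      Finset.sum_insert (by simp only [Finset.mem_insert, Finset.mem_singleton,
        Prod.ext_iff, Fin.ext_iff, Fin.val_mk]; omega),
      Finset.sum_insert (by simp only [Finset.mem_singleton,
        Prod.ext_iff, Fin.ext_iff, Fin.val_mk]; omega),
      Finset.sum_singleton]

lemma an_interior (i : Fin 6) (j : Fin n) (h0 : 0 < j.val) (h1 : j.val < n - 1) :
    anCard (cylinder 6 n) f (i, j) ≤
      min (f (⟨(i.val+1)%6, by omega⟩, j)) 1 + min (f (⟨(i.val+5)%6, by omega⟩, j)) 1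
        + min (f (i, ⟨j.val-1, by omega⟩)) 1 + min (f (i, ⟨j.val+1, by omega⟩)) 1 := by
  have hi := i.isLt; have hj := j.isLt
  unfold anCard
  have hset : ∀ (inst : DecidablePred fun u => (cylinder 6 n).Adj (i,j) u ∧ 0 < f u),
      (@Finset.filter _ (fun u => (cylinder 6 n).Adj (i,j) u ∧ 0 < f u) inst Finset.univ) =
      ({(⟨(i.val+1)%6, by omega⟩, j), (⟨(i.val+5)%6, by omega⟩, j),
       (i, ⟨j.val-1, by omega⟩), (i, ⟨j.val+1, by omega⟩)} : Finset (Fin 6 × Fin n)).filter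
         (fun u => 0 < f u) := by
    intro inst
    ext u
    simp only [Finset.mem_filter, Finset.mem_univ, true_and, Finset.mem_insert,
      Finset.mem_singleton, cyl6_adj, Prod.ext_iff, Fin.ext_iff, Fin.val_mk]
    have := u.1.isLt; have := u.2.isLt
    exact and_congr_left (fun _ => by omega)
  rw [hset _]
  exact card_filter_min4 f _ _ _ _

lemma an_left (i : Fin 6) (j : Fin n) (hj : j.val = 0) (hn : 1 < n) :
    anCard (cylinder 6 n) f (i, j) ≤
      min (f (⟨(i.val+1)%6, by omega⟩, j)) 1 + min (f (⟨(i.val+5)%6, by omega⟩, j)) 1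
        + min (f (i, ⟨j.val+1, by omega⟩)) 1 := by
  have hi := i.isLt; have hjlt := j.isLt
  unfold anCard
  have hset : ∀ (inst : DecidablePred fun u => (cylinder 6 n).Adj (i,j) u ∧ 0 < f u),
      (@Finset.filter _ (fun u => (cylinder 6 n).Adj (i,j) u ∧ 0 < f u) inst Finset.univ) =
      ({(⟨(i.val+1)%6, by omega⟩, j), (⟨(i.val+5)%6, by omega⟩, j),
       (i, ⟨j.val+1, by omega⟩)} : Finset (Fin 6 × Fin n)).filter (fun u => 0 < f u) := by
    intro inst
    ext u
    simp only [Finset.mem_filter, Finset.mem_univ, true_and, Finset.mem_insert,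
      Finset.mem_singleton, cyl6_adj, Prod.ext_iff, Fin.ext_iff, Fin.val_mk]
    have := u.1.isLt; have := u.2.isLt
    exact and_congr_left (fun _ => by omega)
  rw [hset _]
  exact card_filter_min3 f _ _ _

lemma an_right (i : Fin 6) (j : Fin n) (hj : j.val = n - 1) (hn : 1 < n) :
    anCard (cylinder 6 n) f (i, j) ≤
      min (f (⟨(i.val+1)%6, by omega⟩, j)) 1 + min (f (⟨(i.val+5)%6, by omega⟩, j)) 1
        + min (f (i, ⟨j.val-1, by omega⟩)) 1 := by
  have hi := i.isLt; have hjlt := j.isLt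
  unfold anCard
  have hset : ∀ (inst : DecidablePred fun u => (cylinder 6 n).Adj (i,j) u ∧ 0 < f u),
      (@Finset.filter _ (fun u => (cylinder 6 n).Adj (i,j) u ∧ 0 < f u) inst Finset.univ) =
      ({(⟨(i.val+1)%6, by omega⟩, j), (⟨(i.val+5)%6, by omega⟩, j),
       (i, ⟨j.val-1, by omega⟩)} : Finset (Fin 6 × Fin n)).filter (fun u => 0 < f u) := by
    intro inst
    ext u
    simp only [Finset.mem_filter, Finset.mem_univ, true_and, Finset.mem_insert,
      Finset.mem_singleton, cyl6_adj, Prod.ext_iff, Fin.ext_iff, Fin.val_mk]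
    have := u.1.isLt; have := u.2.isLt
    exact and_congr_left (fun _ => by omega)
  rw [hset _]
  exact card_filter_min3 f _ _ _

end nbhd


def colPat (z p q : ℕ) (x : ℕ) : ℕ :=
  if x % 6 = 0 ∨ x % 6 = 1 then z else if x % 6 = 2 ∨ x % 6 = 5 then p else q

lemma colPat_z {z p q : ℕ} {y : ℕ} (h : y % 6 = 0 ∨ y % 6 = 1) : colPat z p q y = z := by
  unfold colPat; rw [if_pos h]

lemma colPat_p {z p q : ℕ} {y : ℕ} (h : y % 6 = 2 ∨ y % 6 = 5) : colPat z p q y = p := by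
  unfold colPat; rw [if_neg (by omega), if_pos h]

lemma colPat_q {z p q : ℕ} {y : ℕ} (h : y % 6 = 3 ∨ y % 6 = 4) : colPat z p q y = q := by
  unfold colPat; rw [if_neg (by omega), if_neg (by omega)]

lemma colPat_congr {z p q : ℕ} {a b : ℕ} (h : a % 6 = b % 6) :
    colPat z p q a = colPat z p q b := by
  unfold colPat; rw [h]

open Fin.NatCast in
lemma colPat_sum (z p q c : ℕ) :
    (∑ i : Fin 6, colPat z p q (i.val + c)) = 2*z + 2*p + 2*q := by
  have step : ∀ i : Fin 6, colPat z p q (i.val + c) =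
      colPat z p q ((i + (c : Fin 6)).val) := by
    intro i
    apply colPat_congr
    have h1 : ((i + (c : Fin 6)).val) = (i.val + c % 6) % 6 := by
      rw [Fin.add_def, Fin.val_natCast]
    rw [h1]; omega
  rw [Finset.sum_congr rfl (fun i _ => step i)]
  rw [show (∑ i : Fin 6, colPat z p q ((i + (c : Fin 6)).val))
        = ∑ i : Fin 6, colPat z p q i.val from
      Fintype.sum_equiv (Equiv.addRight ((c : Fin 6))) _ _ (fun i => rfl)]
  rw [Fin.sum_univ_six]
  rw [colPat_z (by decide), colPat_z (by decide), colPat_p (by decide),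
      colPat_q (by decide), colPat_q (by decide), colPat_p (by decide)]
  ring

def fcons (n P Q A B C : ℕ) (p : Fin 6 × Fin n) : ℕ :=
  if p.2.val = 0 ∨ p.2.val = n - 1 then colPat A C B (p.1.val + 3 * p.2.val)
  else colPat 0 P Q (p.1.val + 3 * p.2.val)

lemma fcons_sum (n P Q A B C : ℕ) (hn : 4 ≤ n) :
    (∑ v : Fin 6 × Fin n, fcons n P Q A B C v) =
      (n-2) * (2*P + 2*Q) + 2 * (2*A + 2*C + 2*B) := by
  rw [Fintype.sum_prod_type_right]
  have col : ∀ j : Fin n, (∑ i : Fin 6, fcons n P Q A B C (i, j)) =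
      if (j.val = 0 ∨ j.val = n-1) then 2*A+2*C+2*B else 2*P+2*Q := by
    intro j
    by_cases h : (j.val = 0 ∨ j.val = n-1)
    · rw [if_pos h]
      rw [Finset.sum_congr rfl (fun i (_ : i ∈ Finset.univ) =>
        (show fcons n P Q A B C (i,j) = colPat A C B (i.val + 3*j.val) from if_pos h))]
      exact colPat_sum A C B _
    · rw [if_neg h]
      rw [Finset.sum_congr rfl (fun i (_ : i ∈ Finset.univ) =>
        (show fcons n P Q A B C (i,j) = colPat 0 P Q (i.val + 3*j.val) from if_neg h))]
      rw [colPat_sum 0 P Q _]; ring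
  rw [Finset.sum_congr rfl (fun j (_ : j ∈ Finset.univ) => col j)]
  rw [Finset.sum_ite]
  have hpos : ∀ (inst : DecidablePred fun j : Fin n => (j.val = 0 ∨ j.val = n-1)),
      (@Finset.filter _ (fun j : Fin n => (j.val = 0 ∨ j.val = n-1)) inst Finset.univ) =
      {(⟨0, by omega⟩ : Fin n), ⟨n-1, by omega⟩} := by
    intro inst
    ext u
    have := u.isLt
    simp only [Finset.mem_filter, Finset.mem_univ, true_and, Finset.mem_insert,
      Finset.mem_singleton, Fin.ext_iff, Fin.val_mk]
    try omega
  have hcard : (Finset.univ.filter (fun j : Fin n => (j.val = 0 ∨ j.val = n-1))).card = 2 := by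
    rw [hpos _]
    rw [Finset.card_insert_of_notMem (by
      simp only [Finset.mem_singleton, Fin.ext_iff, Fin.val_mk]; omega),
      Finset.card_singleton]
  have htot := Finset.card_filter_add_card_filter_not
    (s := (Finset.univ : Finset (Fin n))) (p := fun j : Fin n => (j.val = 0 ∨ j.val = n-1))
  rw [Finset.card_univ, Fintype.card_fin] at htot
  rw [Finset.sum_const, Finset.sum_const, smul_eq_mul, smul_eq_mul, hcard]
  rw [show (Finset.univ.filter (fun j : Fin n => ¬(j.val = 0 ∨ j.val = n-1))).card = n - 2 by
    omega]
  ring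

lemma buildKRDF (n k P Q A B C : ℕ) (hn : 4 ≤ n)
    (capP : P ≤ k+1) (capQ : Q ≤ k+1) (capA : A ≤ k+1) (capB : B ≤ k+1) (capC : C ≤ k+1)
    (hI0 : k+3 ≤ P+2*Q) (hI2 : k+3 ≤ 3*P+Q)
    (hN0 : k+3 ≤ P+Q+B) (hN2 : k+3 ≤ 2*P+Q+C) (hN3 : k+3 ≤ P+2*Q+A)
    (hB0 : k+3 ≤ 2*A+C+Q) (hB2 : k+3 ≤ A+B+C+P) (hB3 : k+2 ≤ 2*B+C) :
    gammaKR k (cylinder 6 n) ≤ (n-2) * (2*P + 2*Q) + 2 * (2*A + 2*C + 2*B) := by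
  apply Nat.sInf_le
  refine ⟨fcons n P Q A B C, ⟨fun v => ?_, fun v _ => ?_⟩, (fcons_sum n P Q A B C hn).symm⟩
  · rcases v with ⟨a, b⟩
    unfold fcons colPat
    split_ifs <;> omega
  rcases v with ⟨⟨iv, hiv⟩, j⟩
  have hjlt := j.isLt
  by_cases hj0 : (j : ℕ) = 0
  · refine le_trans (Nat.add_le_add_left
      (an_left (fcons n P Q A B C) ⟨iv, hiv⟩ j hj0 (by omega)) k) ?_
    rw [nbhd_left (fcons n P Q A B C) ⟨iv, hiv⟩ j hj0 (by omega)]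
    simp only [fcons, Fin.val_mk]
    have hc1 : ((j : ℕ) = 0 ∨ (j : ℕ) = n - 1) := Or.inl hj0
    have hc2 : ¬((j : ℕ) + 1 = 0 ∨ (j : ℕ) + 1 = n - 1) := by omega
    rw [if_pos hc1, if_pos hc1, if_neg hc2, if_pos hc1]
    obtain ⟨x, hx⟩ : ∃ x, (iv + 3 * (j : ℕ)) % 6 = x := ⟨_, rfl⟩
    have hx6 : x < 6 := by omega
    interval_cases x
    · rw [colPat_z (y := iv + 3 * (j : ℕ)) (by omega),
          colPat_z (y := (iv + 1) % 6 + 3 * (j : ℕ)) (by omega),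
          colPat_p (y := (iv + 5) % 6 + 3 * (j : ℕ)) (by omega),
          colPat_q (y := iv + 3 * ((j : ℕ) + 1)) (by omega)]
      omega
    · rw [colPat_z (y := iv + 3 * (j : ℕ)) (by omega),
          colPat_p (y := (iv + 1) % 6 + 3 * (j : ℕ)) (by omega),
          colPat_z (y := (iv + 5) % 6 + 3 * (j : ℕ)) (by omega),
          colPat_q (y := iv + 3 * ((j : ℕ) + 1)) (by omega)]
      omega
    · rw [colPat_p (y := iv + 3 * (j : ℕ)) (by omega),
          colPat_q (y := (iv + 1) % 6 + 3 * (j : ℕ)) (by omega),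
          colPat_z (y := (iv + 5) % 6 + 3 * (j : ℕ)) (by omega),
          colPat_p (y := iv + 3 * ((j : ℕ) + 1)) (by omega)]
      omega
    · rw [colPat_q (y := iv + 3 * (j : ℕ)) (by omega),
          colPat_q (y := (iv + 1) % 6 + 3 * (j : ℕ)) (by omega),
          colPat_p (y := (iv + 5) % 6 + 3 * (j : ℕ)) (by omega),
          colPat_z (y := iv + 3 * ((j : ℕ) + 1)) (by omega)]
      omega
    · rw [colPat_q (y := iv + 3 * (j : ℕ)) (by omega),
          colPat_p (y := (iv + 1) % 6 + 3 * (j : ℕ)) (by omega),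
          colPat_q (y := (iv + 5) % 6 + 3 * (j : ℕ)) (by omega),
          colPat_z (y := iv + 3 * ((j : ℕ) + 1)) (by omega)]
      omega
    · rw [colPat_p (y := iv + 3 * (j : ℕ)) (by omega),
          colPat_z (y := (iv + 1) % 6 + 3 * (j : ℕ)) (by omega),
          colPat_q (y := (iv + 5) % 6 + 3 * (j : ℕ)) (by omega),
          colPat_p (y := iv + 3 * ((j : ℕ) + 1)) (by omega)]
      omega
  · by_cases hjn1 : (j : ℕ) = n - 1
    · refine le_trans (Nat.add_le_add_left
        (an_right (fcons n P Q A B C) ⟨iv, hiv⟩ j hjn1 (by omega)) k) ?_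
      rw [nbhd_right (fcons n P Q A B C) ⟨iv, hiv⟩ j hjn1 (by omega)]
      simp only [fcons, Fin.val_mk]
      have hc1 : ((j : ℕ) = 0 ∨ (j : ℕ) = n - 1) := Or.inr hjn1
      have hc2 : ¬((j : ℕ) - 1 = 0 ∨ (j : ℕ) - 1 = n - 1) := by omega
      rw [if_pos hc1, if_pos hc1, if_neg hc2, if_pos hc1]
      obtain ⟨x, hx⟩ : ∃ x, (iv + 3 * (j : ℕ)) % 6 = x := ⟨_, rfl⟩
      have hx6 : x < 6 := by omega
      interval_cases x
      · rw [colPat_z (y := iv + 3 * (j : ℕ)) (by omega),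
            colPat_z (y := (iv + 1) % 6 + 3 * (j : ℕ)) (by omega),
            colPat_p (y := (iv + 5) % 6 + 3 * (j : ℕ)) (by omega),
            colPat_q (y := iv + 3 * ((j : ℕ) - 1)) (by omega)]
        omega
      · rw [colPat_z (y := iv + 3 * (j : ℕ)) (by omega),
            colPat_p (y := (iv + 1) % 6 + 3 * (j : ℕ)) (by omega),
            colPat_z (y := (iv + 5) % 6 + 3 * (j : ℕ)) (by omega),
            colPat_q (y := iv + 3 * ((j : ℕ) - 1)) (by omega)]
        omega
      · rw [colPat_p (y := iv + 3 * (j : ℕ)) (by omega),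
            colPat_q (y := (iv + 1) % 6 + 3 * (j : ℕ)) (by omega),
            colPat_z (y := (iv + 5) % 6 + 3 * (j : ℕ)) (by omega),
            colPat_p (y := iv + 3 * ((j : ℕ) - 1)) (by omega)]
        omega
      · rw [colPat_q (y := iv + 3 * (j : ℕ)) (by omega),
            colPat_q (y := (iv + 1) % 6 + 3 * (j : ℕ)) (by omega),
            colPat_p (y := (iv + 5) % 6 + 3 * (j : ℕ)) (by omega),
            colPat_z (y := iv + 3 * ((j : ℕ) - 1)) (by omega)]
        omega
      · rw [colPat_q (y := iv + 3 * (j : ℕ)) (by omega),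
            colPat_p (y := (iv + 1) % 6 + 3 * (j : ℕ)) (by omega),
            colPat_q (y := (iv + 5) % 6 + 3 * (j : ℕ)) (by omega),
            colPat_z (y := iv + 3 * ((j : ℕ) - 1)) (by omega)]
        omega
      · rw [colPat_p (y := iv + 3 * (j : ℕ)) (by omega),
            colPat_z (y := (iv + 1) % 6 + 3 * (j : ℕ)) (by omega),
            colPat_q (y := (iv + 5) % 6 + 3 * (j : ℕ)) (by omega),
            colPat_p (y := iv + 3 * ((j : ℕ) - 1)) (by omega)]
        omega
    · have h0 : 0 < (j : ℕ) := by omega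
      have h1 : (j : ℕ) < n - 1 := by omega
      refine le_trans (Nat.add_le_add_left
        (an_interior (fcons n P Q A B C) ⟨iv, hiv⟩ j h0 h1) k) ?_
      rw [nbhd_interior (fcons n P Q A B C) ⟨iv, hiv⟩ j h0 h1]
      simp only [fcons, Fin.val_mk]
      have hc1 : ¬((j : ℕ) = 0 ∨ (j : ℕ) = n - 1) := by omega
      rw [if_neg hc1, if_neg hc1, if_neg hc1]
      by_cases hj1 : (j : ℕ) = 1
      · have hc2 : ((j : ℕ) - 1 = 0 ∨ (j : ℕ) - 1 = n - 1) := Or.inl (by omega)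
        have hc3 : ¬((j : ℕ) + 1 = 0 ∨ (j : ℕ) + 1 = n - 1) := by omega
        rw [if_pos hc2, if_neg hc3]
        obtain ⟨x, hx⟩ : ∃ x, (iv + 3 * (j : ℕ)) % 6 = x := ⟨_, rfl⟩
        have hx6 : x < 6 := by omega
        interval_cases x
        · rw [colPat_z (y := iv + 3 * (j : ℕ)) (by omega),
              colPat_z (y := (iv + 1) % 6 + 3 * (j : ℕ)) (by omega),
              colPat_p (y := (iv + 5) % 6 + 3 * (j : ℕ)) (by omega),
              colPat_q (y := iv + 3 * ((j : ℕ) - 1)) (by omega),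
              colPat_q (y := iv + 3 * ((j : ℕ) + 1)) (by omega)]
          omega
        · rw [colPat_z (y := iv + 3 * (j : ℕ)) (by omega),
              colPat_p (y := (iv + 1) % 6 + 3 * (j : ℕ)) (by omega),
              colPat_z (y := (iv + 5) % 6 + 3 * (j : ℕ)) (by omega),
              colPat_q (y := iv + 3 * ((j : ℕ) - 1)) (by omega),
              colPat_q (y := iv + 3 * ((j : ℕ) + 1)) (by omega)]
          omega
        · rw [colPat_p (y := iv + 3 * (j : ℕ)) (by omega),
              colPat_q (y := (iv + 1) % 6 + 3 * (j : ℕ)) (by omega),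
              colPat_z (y := (iv + 5) % 6 + 3 * (j : ℕ)) (by omega),
              colPat_p (y := iv + 3 * ((j : ℕ) - 1)) (by omega),
              colPat_p (y := iv + 3 * ((j : ℕ) + 1)) (by omega)]
          omega
        · rw [colPat_q (y := iv + 3 * (j : ℕ)) (by omega),
              colPat_q (y := (iv + 1) % 6 + 3 * (j : ℕ)) (by omega),
              colPat_p (y := (iv + 5) % 6 + 3 * (j : ℕ)) (by omega),
              colPat_z (y := iv + 3 * ((j : ℕ) - 1)) (by omega),
              colPat_z (y := iv + 3 * ((j : ℕ) + 1)) (by omega)]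
          omega
        · rw [colPat_q (y := iv + 3 * (j : ℕ)) (by omega),
              colPat_p (y := (iv + 1) % 6 + 3 * (j : ℕ)) (by omega),
              colPat_q (y := (iv + 5) % 6 + 3 * (j : ℕ)) (by omega),
              colPat_z (y := iv + 3 * ((j : ℕ) - 1)) (by omega),
              colPat_z (y := iv + 3 * ((j : ℕ) + 1)) (by omega)]
          omega
        · rw [colPat_p (y := iv + 3 * (j : ℕ)) (by omega),
              colPat_z (y := (iv + 1) % 6 + 3 * (j : ℕ)) (by omega),
              colPat_q (y := (iv + 5) % 6 + 3 * (j : ℕ)) (by omega),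
              colPat_p (y := iv + 3 * ((j : ℕ) - 1)) (by omega),
              colPat_p (y := iv + 3 * ((j : ℕ) + 1)) (by omega)]
          omega
      · by_cases hjn2 : (j : ℕ) + 1 = n - 1
        · have hc2 : ¬((j : ℕ) - 1 = 0 ∨ (j : ℕ) - 1 = n - 1) := by omega
          have hc3 : ((j : ℕ) + 1 = 0 ∨ (j : ℕ) + 1 = n - 1) := Or.inr hjn2
          rw [if_neg hc2, if_pos hc3]
          obtain ⟨x, hx⟩ : ∃ x, (iv + 3 * (j : ℕ)) % 6 = x := ⟨_, rfl⟩
          have hx6 : x < 6 := by omega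
          interval_cases x
          · rw [colPat_z (y := iv + 3 * (j : ℕ)) (by omega),
                colPat_z (y := (iv + 1) % 6 + 3 * (j : ℕ)) (by omega),
                colPat_p (y := (iv + 5) % 6 + 3 * (j : ℕ)) (by omega),
                colPat_q (y := iv + 3 * ((j : ℕ) - 1)) (by omega),
                colPat_q (y := iv + 3 * ((j : ℕ) + 1)) (by omega)]
            omega
          · rw [colPat_z (y := iv + 3 * (j : ℕ)) (by omega),
                colPat_p (y := (iv + 1) % 6 + 3 * (j : ℕ)) (by omega),
                colPat_z (y := (iv + 5) % 6 + 3 * (j : ℕ)) (by omega),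
                colPat_q (y := iv + 3 * ((j : ℕ) - 1)) (by omega),
                colPat_q (y := iv + 3 * ((j : ℕ) + 1)) (by omega)]
            omega
          · rw [colPat_p (y := iv + 3 * (j : ℕ)) (by omega),
                colPat_q (y := (iv + 1) % 6 + 3 * (j : ℕ)) (by omega),
                colPat_z (y := (iv + 5) % 6 + 3 * (j : ℕ)) (by omega),
                colPat_p (y := iv + 3 * ((j : ℕ) - 1)) (by omega),
                colPat_p (y := iv + 3 * ((j : ℕ) + 1)) (by omega)]
            omega
          · rw [colPat_q (y := iv + 3 * (j : ℕ)) (by omega),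
                colPat_q (y := (iv + 1) % 6 + 3 * (j : ℕ)) (by omega),
                colPat_p (y := (iv + 5) % 6 + 3 * (j : ℕ)) (by omega),
                colPat_z (y := iv + 3 * ((j : ℕ) - 1)) (by omega),
                colPat_z (y := iv + 3 * ((j : ℕ) + 1)) (by omega)]
            omega
          · rw [colPat_q (y := iv + 3 * (j : ℕ)) (by omega),
                colPat_p (y := (iv + 1) % 6 + 3 * (j : ℕ)) (by omega),
                colPat_q (y := (iv + 5) % 6 + 3 * (j : ℕ)) (by omega),
                colPat_z (y := iv + 3 * ((j : ℕ) - 1)) (by omega),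
                colPat_z (y := iv + 3 * ((j : ℕ) + 1)) (by omega)]
            omega
          · rw [colPat_p (y := iv + 3 * (j : ℕ)) (by omega),
                colPat_z (y := (iv + 1) % 6 + 3 * (j : ℕ)) (by omega),
                colPat_q (y := (iv + 5) % 6 + 3 * (j : ℕ)) (by omega),
                colPat_p (y := iv + 3 * ((j : ℕ) - 1)) (by omega),
                colPat_p (y := iv + 3 * ((j : ℕ) + 1)) (by omega)]
            omega
        · have hc2 : ¬((j : ℕ) - 1 = 0 ∨ (j : ℕ) - 1 = n - 1) := by omega
          have hc3 : ¬((j : ℕ) + 1 = 0 ∨ (j : ℕ) + 1 = n - 1) := by omega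
          rw [if_neg hc2, if_neg hc3]
          obtain ⟨x, hx⟩ : ∃ x, (iv + 3 * (j : ℕ)) % 6 = x := ⟨_, rfl⟩
          have hx6 : x < 6 := by omega
          interval_cases x
          · rw [colPat_z (y := iv + 3 * (j : ℕ)) (by omega),
                colPat_z (y := (iv + 1) % 6 + 3 * (j : ℕ)) (by omega),
                colPat_p (y := (iv + 5) % 6 + 3 * (j : ℕ)) (by omega),
                colPat_q (y := iv + 3 * ((j : ℕ) - 1)) (by omega),
                colPat_q (y := iv + 3 * ((j : ℕ) + 1)) (by omega)]
            omega
          · rw [colPat_z (y := iv + 3 * (j : ℕ)) (by omega),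
                colPat_p (y := (iv + 1) % 6 + 3 * (j : ℕ)) (by omega),
                colPat_z (y := (iv + 5) % 6 + 3 * (j : ℕ)) (by omega),
                colPat_q (y := iv + 3 * ((j : ℕ) - 1)) (by omega),
                colPat_q (y := iv + 3 * ((j : ℕ) + 1)) (by omega)]
            omega
          · rw [colPat_p (y := iv + 3 * (j : ℕ)) (by omega),
                colPat_q (y := (iv + 1) % 6 + 3 * (j : ℕ)) (by omega),
                colPat_z (y := (iv + 5) % 6 + 3 * (j : ℕ)) (by omega),
                colPat_p (y := iv + 3 * ((j : ℕ) - 1)) (by omega),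
                colPat_p (y := iv + 3 * ((j : ℕ) + 1)) (by omega)]
            omega
          · rw [colPat_q (y := iv + 3 * (j : ℕ)) (by omega),
                colPat_q (y := (iv + 1) % 6 + 3 * (j : ℕ)) (by omega),
                colPat_p (y := (iv + 5) % 6 + 3 * (j : ℕ)) (by omega),
                colPat_z (y := iv + 3 * ((j : ℕ) - 1)) (by omega),
                colPat_z (y := iv + 3 * ((j : ℕ) + 1)) (by omega)]
            omega
          · rw [colPat_q (y := iv + 3 * (j : ℕ)) (by omega),
                colPat_p (y := (iv + 1) % 6 + 3 * (j : ℕ)) (by omega),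
                colPat_q (y := (iv + 5) % 6 + 3 * (j : ℕ)) (by omega),
                colPat_z (y := iv + 3 * ((j : ℕ) - 1)) (by omega),
                colPat_z (y := iv + 3 * ((j : ℕ) + 1)) (by omega)]
            omega
          · rw [colPat_p (y := iv + 3 * (j : ℕ)) (by omega),
                colPat_z (y := (iv + 1) % 6 + 3 * (j : ℕ)) (by omega),
                colPat_q (y := (iv + 5) % 6 + 3 * (j : ℕ)) (by omega),
                colPat_p (y := iv + 3 * ((j : ℕ) - 1)) (by omega),
                colPat_p (y := iv + 3 * ((j : ℕ) + 1)) (by omega)]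
            omega

theorem stmt10 (k n : ℕ) (hk : 1 ≤ k) (hn : 4 ≤ n) :
    gammaKR k (cylinder 6 n) ≤
      6 * (n - 2) * ((k + 5) ⌈/⌉ 5) + 12 * ((k + 3 - ((k + 5) ⌈/⌉ 5)) ⌈/⌉ 3) - 2 * (n ⌈/⌉ 2) := by
  have hcc : (k + 5) ⌈/⌉ 5 = (k + 9) / 5 := by
    rw [Nat.ceilDiv_eq_add_pred_div]; congr 1
  rw [hcc]
  obtain ⟨c, hcdef⟩ : ∃ c, (k + 9) / 5 = c := ⟨_, rfl⟩
  rw [hcdef]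
  have hdd : (k + 3 - c) ⌈/⌉ 3 = (k + 5 - c) / 3 := by
    rw [Nat.ceilDiv_eq_add_pred_div]; congr 1; omega
  rw [hdd]
  obtain ⟨d, hddef⟩ : ∃ d, (k + 5 - c) / 3 = d := ⟨_, rfl⟩
  rw [hddef]
  have hnn : n ⌈/⌉ 2 = (n + 1) / 2 := by rw [Nat.ceilDiv_eq_add_pred_div]; congr 1
  rw [hnn]
  -- parameters
  refine le_trans (buildKRDF n k c (min (2*c-1) (k+1))
      (if k = 1 then 1 else if k = 2 then 0 else if 4*c ≤ k+4 then k+5-4*c else 1)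
      (if k = 1 then 1 else if k = 2 then 1 else if 4*c ≤ k+4 then k+4-3*c else c)
      (if k = 1 then 1 else if k = 2 then 2 else if 4*c ≤ k+4 then 6*c-(k+6) else k+2-2*c)
      hn ?_ ?_ ?_ ?_ ?_ ?_ ?_ ?_ ?_ ?_ ?_ ?_ ?_) ?_
  · omega
  · omega
  · split_ifs <;> omega
  · split_ifs <;> omega
  · split_ifs <;> omega
  · omega
  · omega
  · split_ifs <;> omega
  · split_ifs <;> omega
  · split_ifs <;> omega
  · split_ifs <;> omega
  · split_ifs <;> omega
  · split_ifs <;> omega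
  -- weight bound
  have hSg : 2*c + 2*(min (2*c-1) (k+1)) + 2 ≤ 6*c := by omega
  have hSh : 2*(if k = 1 then 1 else if k = 2 then 0 else if 4*c ≤ k+4 then k+5-4*c else 1)
      + 2*(if k = 1 then 1 else if k = 2 then 2 else if 4*c ≤ k+4 then 6*c-(k+6) else k+2-2*c)
      + 2*(if k = 1 then 1 else if k = 2 then 1 else if 4*c ≤ k+4 then k+4-3*c else c)
      ≤ 6*d := by split_ifs <;> omega
  have key : ∀ a b : ℕ, a + 2 ≤ 6*c → b ≤ 6*d →
      (n-2) * a + 2 * b ≤ 6 * (n-2) * c + 12 * d - 2 * ((n+1)/2) := by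
    intro a b ha hb
    have h1 : (n-2)*a + (n-2)*2 ≤ (n-2)*(6*c) := by
      rw [← Nat.mul_add]; exact Nat.mul_le_mul_left _ ha
    have h2 : 6 * (n-2) * c = (n-2)*(6*c) := by ring
    rw [h2]
    generalize hM : (n-2)*(6*c) = M at *
    generalize hW : (n-2)*a = W at *
    omega
  exact key _ _ hSg hSh
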